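/- Fix λ > 0. For every ε > 0 there exists T > 0 such that for all t ≥ T and all x ∈ [−λt − t^{2/3}, −λt + t^{2/3}], the Gaussian probability measure ν_x with mean x − λt and variance t satisfies | (2λ/(e^{2λ} − 1)) · √(2πt) · e^{(λt−x)²/(2t)} · ν_x([−1, 0]) − 1 | ≤ ε. In other words, uniformly over x in this window, P(x + B_t − λt ∈ [−1, 0]) = (1 + o_t(1)) · ((e^{2λ} − 1)/(2λ)) · (1/√(2πt)) · e^{−(λt−x)²/(2t)}. -/

import Mathlib

open MeasureTheory ProbabilityTheory Real

lemma aux_exp_integral (lam : ℝ) (hlam : 0 < lam) :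
    ∫ y in Set.Icc (-1:ℝ) 0, Real.exp (-(2*lam*y)) = (Real.exp (2*lam) - 1)/(2*lam) := by
  have h2l : (2*lam) ≠ 0 := by positivity
  rw [MeasureTheory.integral_Icc_eq_integral_Ioc,
    ← intervalIntegral.integral_of_le (by norm_num : (-1:ℝ) ≤ 0)]
  have hd : ∀ y ∈ Set.uIcc (-1:ℝ) 0,
      HasDerivAt (fun y => -Real.exp (-(2*lam*y)) / (2*lam)) (Real.exp (-(2*lam*y))) y := by
    intro y _
    have h1 : HasDerivAt (fun y : ℝ => -(2*lam*y)) (-(2*lam)) y := by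
      exact (((hasDerivAt_id y).const_mul (2*lam)).neg).congr_deriv (by simp)
    have h3 := (h1.exp.neg).div_const (2*lam)
    refine h3.congr_deriv ?_
    rw [div_eq_iff h2l]; ring
  have hint : IntervalIntegrable (fun y => Real.exp (-(2*lam*y))) volume (-1) 0 :=
    (Real.continuous_exp.comp (continuous_const.mul continuous_id).neg).intervalIntegrable _ _
  rw [intervalIntegral.integral_eq_sub_of_hasDerivAt hd hint]
  have : -(2*lam*(0:ℝ)) = 0 := by ring
  rw [this, Real.exp_zero]
  have : -(2*lam*(-1:ℝ)) = 2*lam := by ring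
  rw [this]
  field_simp
  ring

set_option maxHeartbeats 1000000 in
/-- Uniformly over `x ∈ [-λt - t^{2/3}, -λt + t^{2/3}]` (with `λ > 0`),
`P(x + B_t - λt ∈ [-1, 0]) = (1 + o_t(1)) ((e^{2λ} - 1)/(2λ)) (1/√(2πt)) e^{-(λt-x)²/(2t)}`. -/
theorem interval_prob_asymptotics_left_window (lam : ℝ) (hlam : 0 < lam) :
    ∀ ε > 0, ∃ T > 0, ∀ t ≥ T,
      ∀ x ∈ Set.Icc (-lam * t - t ^ ((2 : ℝ) / 3)) (-lam * t + t ^ ((2 : ℝ) / 3)),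
        |(2 * lam / (Real.exp (2 * lam) - 1)) * Real.sqrt (2 * Real.pi * t)
            * Real.exp ((lam * t - x) ^ 2 / (2 * t))
            * (gaussianReal (x - lam * t) t.toNNReal (Set.Icc (-1) 0)).toReal - 1| ≤ ε := by
  intro ε hε
  have hε1 : (0:ℝ) < 1 + ε := by linarith
  set c := Real.log (1 + ε) with hcdef
  have hc0 : 0 < c := Real.log_pos (by linarith)
  have hec : Real.exp c = 1 + ε := Real.exp_log hε1
  refine ⟨max 1 (max ((2/c)^3) (1/c)), lt_of_lt_of_le one_pos (le_max_left _ _), ?_⟩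
  intro t ht x hx
  have ht1 : (1:ℝ) ≤ t := le_trans (le_max_left _ _) ht
  have ht0 : (0:ℝ) < t := by linarith
  have htc : 1/c ≤ t := le_trans (le_trans (le_max_right _ _) (le_max_right _ _)) ht
  have htc2 : (2/c)^3 ≤ t := le_trans (le_trans (le_max_left _ _) (le_max_right _ _)) ht
  -- window bound
  have hw : |x + lam * t| ≤ t ^ ((2:ℝ)/3) := by
    rw [abs_le]
    obtain ⟨h1, h2⟩ := hx
    constructor <;> nlinarith
  -- bound t^{2/3}/t ≤ c/2
  have h2c : (0:ℝ) < 2/c := by positivity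
  have ht13 : 2/c ≤ t ^ ((1:ℝ)/3) := by
    have h := Real.rpow_le_rpow (by positivity) htc2 (by norm_num : (0:ℝ) ≤ 1/3)
    rw [← Real.rpow_natCast (2/c) 3, ← Real.rpow_mul h2c.le] at h
    norm_num at h
    exact h
  have hq : t ^ ((2:ℝ)/3) * (t ^ ((1:ℝ)/3)) = t := by
    rw [← Real.rpow_add ht0]
    norm_num
  have hB : t ^ ((2:ℝ)/3) / t ≤ c/2 := by
    rw [div_le_iff₀ ht0]
    have hp : (0:ℝ) < t ^ ((2:ℝ)/3) := Real.rpow_pos_of_pos ht0 _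
    have h2 : 2 ≤ t ^ ((1:ℝ)/3) * c := (div_le_iff₀ hc0).mp ht13
    nlinarith [mul_le_mul_of_nonneg_left h2 hp.le]
  have h2t : 1/(2*t) ≤ c/2 := by
    have h1 : 1 ≤ t * c := (div_le_iff₀ hc0).mp htc
    rw [div_le_div_iff₀ (by positivity) (by norm_num : (0:ℝ) < 2)]
    nlinarith
  -- gaussian measure as integral
  have hv : t.toNNReal ≠ 0 := (Real.toNNReal_pos.mpr ht0).ne'
  have hvr : ((t.toNNReal : ℝ)) = t := Real.coe_toNNReal t ht0.le
  have hnn : 0 ≤ ∫ y in Set.Icc (-1:ℝ) 0, gaussianPDFReal (x - lam*t) t.toNNReal y :=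
    setIntegral_nonneg measurableSet_Icc fun y _ => gaussianPDFReal_nonneg _ _ _
  set I := ∫ y in Set.Icc (-1:ℝ) 0, Real.exp ((2*y*(x - lam*t) - y^2)/(2*t)) with hIdef
  have hexp : ∀ y : ℝ, Real.exp ((lam * t - x)^2/(2*t)) * Real.exp (-(y - (x - lam*t))^2/(2*t))
      = Real.exp ((2*y*(x - lam*t) - y^2)/(2*t)) := by
    intro y
    rw [← Real.exp_add]
    congr 1
    field_simp
    ring
  have hs0 : (0:ℝ) < Real.sqrt (2*π*t) := Real.sqrt_pos.mpr (by positivity)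
  have hmain : (2 * lam / (Real.exp (2 * lam) - 1)) * Real.sqrt (2 * Real.pi * t)
        * Real.exp ((lam * t - x) ^ 2 / (2 * t))
        * (gaussianReal (x - lam * t) t.toNNReal (Set.Icc (-1) 0)).toReal
      = (2 * lam / (Real.exp (2 * lam) - 1)) * I := by
    rw [gaussianReal_apply_eq_integral _ hv, ENNReal.toReal_ofReal hnn]
    simp only [gaussianPDFReal, hvr]
    rw [MeasureTheory.integral_const_mul]
    have hEI : Real.exp ((lam*t - x)^2/(2*t))
        * (∫ y in Set.Icc (-1:ℝ) 0, Real.exp (-(y - (x - lam*t))^2/(2*t))) = I := by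
      rw [hIdef, ← MeasureTheory.integral_const_mul]
      exact setIntegral_congr_fun measurableSet_Icc fun y _ => hexp y
    rw [← hEI]
    linear_combination (2 * lam / (Real.exp (2 * lam) - 1)
        * Real.exp ((lam * t - x) ^ 2 / (2 * t))
        * (∫ y in Set.Icc (-1:ℝ) 0, Real.exp (-(y - (x - lam*t))^2/(2*t))))
      * mul_inv_cancel₀ hs0.ne'
  rw [hmain]
  -- pointwise exponent bound
  have hpt : ∀ y ∈ Set.Icc (-1:ℝ) 0, |(2*y*(x - lam*t) - y^2)/(2*t) + 2*lam*y| ≤ c := by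
    intro y hy
    have hy1 : -1 ≤ y := hy.1
    have hy0 : y ≤ 0 := hy.2
    have habs : |y| ≤ 1 := abs_le.mpr ⟨hy1, hy0.trans zero_le_one⟩
    have heq : (2*y*(x - lam*t) - y^2)/(2*t) + 2*lam*y = y*(x + lam*t)/t - y^2/(2*t) := by
      field_simp
      ring
    rw [heq]
    have h1 : |y*(x + lam*t)/t| ≤ t^((2:ℝ)/3)/t := by
      rw [abs_div, abs_of_pos ht0, abs_mul]
      gcongr
      calc |y| * |x + lam*t| ≤ 1 * (t^((2:ℝ)/3)) :=
            mul_le_mul habs hw (abs_nonneg _) zero_le_one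
        _ = t^((2:ℝ)/3) := one_mul _
    have h2 : |y^2/(2*t)| ≤ 1/(2*t) := by
      rw [abs_div, abs_of_pos (by positivity : (0:ℝ) < 2*t)]
      gcongr
      rw [abs_of_nonneg (sq_nonneg y)]
      nlinarith
    calc |y*(x + lam*t)/t - y^2/(2*t)| ≤ |y*(x + lam*t)/t| + |y^2/(2*t)| := abs_sub _ _
      _ ≤ c/2 + c/2 := add_le_add (h1.trans hB) (h2.trans h2t)
      _ = c := by ring
  -- integrability
  have hcontI : IntegrableOn (fun y => Real.exp ((2*y*(x - lam*t) - y^2)/(2*t)))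
      (Set.Icc (-1:ℝ) 0) volume := by
    apply Continuous.integrableOn_Icc
    exact Real.continuous_exp.comp
      ((((continuous_const.mul continuous_id).mul continuous_const).sub
        (continuous_pow 2)).div_const _)
  have hcontp : IntegrableOn (fun y => Real.exp (-(2*lam*y) + c)) (Set.Icc (-1:ℝ) 0) volume := by
    apply Continuous.integrableOn_Icc
    exact Real.continuous_exp.comp
      (((continuous_const.mul continuous_id).neg).add continuous_const)
  have hcontm : IntegrableOn (fun y => Real.exp (-(2*lam*y) - c)) (Set.Icc (-1:ℝ) 0) volume := by
    apply Continuous.integrableOn_Icc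
    exact Real.continuous_exp.comp
      (((continuous_const.mul continuous_id).neg).sub continuous_const)
  set K := (Real.exp (2*lam) - 1)/(2*lam) with hKdef
  have hexplam : 1 < Real.exp (2*lam) := by
    rw [← Real.exp_zero]
    exact Real.exp_lt_exp.mpr (by linarith)
  have hK0 : 0 < K := div_pos (by linarith) (by linarith)
  have hJp : ∫ y in Set.Icc (-1:ℝ) 0, Real.exp (-(2*lam*y) + c) = K * Real.exp c := by
    simp only [Real.exp_add]
    rw [MeasureTheory.integral_mul_const, aux_exp_integral lam hlam]
  have hJm : ∫ y in Set.Icc (-1:ℝ) 0, Real.exp (-(2*lam*y) - c) = K * Real.exp (-c) := by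
    simp only [sub_eq_add_neg, Real.exp_add]
    rw [MeasureTheory.integral_mul_const, aux_exp_integral lam hlam]
  have hIub : I ≤ K * Real.exp c := by
    rw [← hJp, hIdef]
    apply setIntegral_mono_on hcontI hcontp measurableSet_Icc
    intro y hy
    have h := abs_le.mp (hpt y hy)
    exact Real.exp_le_exp.mpr (by linarith [h.2])
  have hIlb : K * Real.exp (-c) ≤ I := by
    rw [← hJm, hIdef]
    apply setIntegral_mono_on hcontm hcontI measurableSet_Icc
    intro y hy
    have h := abs_le.mp (hpt y hy)
    exact Real.exp_le_exp.mpr (by linarith [h.1])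
  have hC0 : 0 < 2 * lam / (Real.exp (2 * lam) - 1) := div_pos (by linarith) (by linarith)
  have hCK : (2 * lam / (Real.exp (2 * lam) - 1)) * K = 1 := by
    have hne : (Real.exp (2*lam) - 1) * (2*lam) ≠ 0 :=
      mul_ne_zero (by linarith) (by positivity)
    rw [hKdef, div_mul_div_comm, mul_comm (2*lam)]
    exact div_self hne
  have hub : (2 * lam / (Real.exp (2 * lam) - 1)) * I ≤ 1 + ε := by
    calc (2 * lam / (Real.exp (2 * lam) - 1)) * I
        ≤ (2 * lam / (Real.exp (2 * lam) - 1)) * (K * Real.exp c) :=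
          mul_le_mul_of_nonneg_left hIub hC0.le
      _ = Real.exp c := by rw [← mul_assoc, hCK, one_mul]
      _ = 1 + ε := hec
  have hlb : 1 - ε ≤ (2 * lam / (Real.exp (2 * lam) - 1)) * I := by
    have h1 : (2 * lam / (Real.exp (2 * lam) - 1)) * (K * Real.exp (-c))
        ≤ (2 * lam / (Real.exp (2 * lam) - 1)) * I := mul_le_mul_of_nonneg_left hIlb hC0.le
    have h2 : (2 * lam / (Real.exp (2 * lam) - 1)) * (K * Real.exp (-c)) = (1 + ε)⁻¹ := by
      rw [← mul_assoc, hCK, one_mul, Real.exp_neg, hec]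
    have h3 : 1 - ε ≤ (1 + ε)⁻¹ := by
      rw [inv_eq_one_div, le_div_iff₀ hε1]
      nlinarith
    linarith
  rw [abs_le]
  constructor <;> linarith
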